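/- Let K be a field, S = K[x_{ij} : 1 ≤ i,j ≤ n], and G a simple graph on [n]. With respect to the reverse lexicographic order induced by x_{11} > x_{12} > ⋯ > x_{nn}, the initial monomial of f_{ij} = x_{ii}x_{jj} − x_{ij}x_{ji} (for i < j) is x_{ij}x_{ji}, and the set {f_{ij} : {i,j} ∈ E(G)} is a Gröbner basis of the ideal P_G it generates. -/

import Mathlib

open MvPolynomial

/-- The diagonal 2-minor `f_{ij} = x_{ii}x_{jj} - x_{ij}x_{ji}`. -/
noncomputable def diagMinor (K : Type*) [Field K] (n : ℕ) (i j : Fin n) :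
    MvPolynomial (Fin n × Fin n) K :=
  X (i, i) * X (j, j) - X (i, j) * X (j, i)

/-- The ideal `P_G` generated by the diagonal 2-minors of the edges of `G`. -/
noncomputable def diagIdeal (K : Type*) [Field K] (n : ℕ)
    (G : SimpleGraph (Fin n)) : Ideal (MvPolynomial (Fin n × Fin n) K) :=
  Ideal.span {f | ∃ i j : Fin n, G.Adj i j ∧ i < j ∧ f = diagMinor K n i j}

/-- Row-major rank of the variable `x_{ab}`: the variables are ordered
`x_{11} > x_{12} > ⋯ > x_{1n} > x_{21} > ⋯ > x_{nn}`, with smaller rank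
meaning larger variable. -/
def varRank (n : ℕ) (p : Fin n × Fin n) : ℕ := (p.1 : ℕ) * n + (p.2 : ℕ)

/-- `μ` is smaller than `ν` in the reverse lexicographic order induced by the
variable order `x_{11} > x_{12} > ⋯ > x_{nn}`: at the smallest variable
(largest rank) where the exponents differ, `μ` has the larger exponent. -/
def RevLexLt (n : ℕ) (μ ν : (Fin n × Fin n) →₀ ℕ) : Prop :=
  ∃ v : Fin n × Fin n, ν v < μ v ∧
    ∀ w : Fin n × Fin n, varRank n v < varRank n w → μ w = ν w

/-- `μ` is the initial (leading) monomial of `f` with respect to the reverse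
lexicographic order. -/
def IsInitialMonomial {K : Type*} [Field K] (n : ℕ)
    (f : MvPolynomial (Fin n × Fin n) K) (μ : (Fin n × Fin n) →₀ ℕ) : Prop :=
  f ≠ 0 ∧ μ ∈ f.support ∧ ∀ ν ∈ f.support, ν ≠ μ → RevLexLt n ν μ

/-- The initial ideal of `I` with respect to the reverse lexicographic order:
the ideal generated by the initial monomials of the nonzero elements of `I`. -/
noncomputable def initialIdeal (K : Type*) [Field K] (n : ℕ)
    (I : Ideal (MvPolynomial (Fin n × Fin n) K)) :
    Ideal (MvPolynomial (Fin n × Fin n) K) :=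
  Ideal.span {g | ∃ f ∈ I, ∃ μ : (Fin n × Fin n) →₀ ℕ,
    IsInitialMonomial n f μ ∧ g = monomial μ (1 : K)}

open Classical

noncomputable section
variable {n : ℕ}

def mred (G : SimpleGraph (Fin n)) (μ : (Fin n × Fin n) →₀ ℕ) (a b : Fin n) : ℕ :=
  if G.Adj a b then min (μ (a, b)) (μ (b, a)) else 0

lemma mred_symm (G : SimpleGraph (Fin n)) (μ : (Fin n × Fin n) →₀ ℕ) (a b : Fin n) :
    mred G μ a b = mred G μ b a := by
  unfold mred
  by_cases h : G.Adj a b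
  · rw [if_pos h, if_pos h.symm, min_comm]
  · rw [if_neg h, if_neg fun h' => h h'.symm]

lemma mred_self (G : SimpleGraph (Fin n)) (μ : (Fin n × Fin n) →₀ ℕ) (a : Fin n) :
    mred G μ a a = 0 := by simp [mred]

lemma mred_le (G : SimpleGraph (Fin n)) (μ : (Fin n × Fin n) →₀ ℕ) (a b : Fin n) :
    mred G μ a b ≤ μ (a, b) := by
  unfold mred; split_ifs
  · exact min_le_left _ _
  · exact Nat.zero_le _

def Nred (G : SimpleGraph (Fin n)) (μ : (Fin n × Fin n) →₀ ℕ) : (Fin n × Fin n) →₀ ℕ :=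
  Finsupp.equivFunOnFinite.symm fun p =>
    if p.1 = p.2 then μ p + ∑ c, mred G μ p.1 c else μ p - mred G μ p.1 p.2

lemma Nred_apply (G : SimpleGraph (Fin n)) (μ : (Fin n × Fin n) →₀ ℕ) (a b : Fin n) :
    Nred G μ (a, b) = if a = b then μ (a, b) + ∑ c, mred G μ a c
      else μ (a, b) - mred G μ a b := rfl

lemma key_exchange (G : SimpleGraph (Fin n)) {i j : Fin n} (hij : G.Adj i j)
    (ν : (Fin n × Fin n) →₀ ℕ) :
    Nred G (ν + (Finsupp.single (i, i) 1 + Finsupp.single (j, j) 1)) =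
      Nred G (ν + (Finsupp.single (i, j) 1 + Finsupp.single (j, i) 1)) := by
  have hne : i ≠ j := hij.ne
  set μ1 := ν + (Finsupp.single (i, i) 1 + Finsupp.single (j, j) 1) with hμ1
  set μ2 := ν + (Finsupp.single (i, j) 1 + Finsupp.single (j, i) 1) with hμ2
  have h1 : ∀ a b : Fin n, a ≠ b → μ1 (a, b) = ν (a, b) := by
    intro a b hab
    have e1 : (i, i) ≠ (a, b) := by rintro ⟨⟩; exact hab rfl
    have e2 : (j, j) ≠ (a, b) := by rintro ⟨⟩; exact hab rfl
    simp [hμ1, Finsupp.single_apply, e1, e2]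
  have h2 : ∀ a : Fin n, μ1 (a, a) = ν (a, a)
      + ((if a = i then 1 else 0) + (if a = j then 1 else 0)) := by
    intro a
    have e1 : ((i, i) = (a, a)) ↔ (a = i) := by
      constructor
      · rintro ⟨⟩; rfl
      · rintro rfl; rfl
    have e2 : ((j, j) = (a, a)) ↔ (a = j) := by
      constructor
      · rintro ⟨⟩; rfl
      · rintro rfl; rfl
    simp [hμ1, Finsupp.single_apply, e1, e2]
  have h3 : ∀ a b : Fin n, μ2 (a, b) = ν (a, b)
      + ((if a = i ∧ b = j then 1 else 0) + (if a = j ∧ b = i then 1 else 0)) := by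
    intro a b
    have e1 : ((i, j) = (a, b)) ↔ (a = i ∧ b = j) := by
      constructor
      · rintro ⟨⟩; exact ⟨rfl, rfl⟩
      · rintro ⟨rfl, rfl⟩; rfl
    have e2 : ((j, i) = (a, b)) ↔ (a = j ∧ b = i) := by
      constructor
      · rintro ⟨⟩; exact ⟨rfl, rfl⟩
      · rintro ⟨rfl, rfl⟩; rfl
    simp [hμ2, Finsupp.single_apply, e1, e2]
  have h4 : ∀ a : Fin n, μ2 (a, a) = ν (a, a) := by
    intro a
    rw [h3 a a]
    have e1 : ¬(a = i ∧ a = j) := by rintro ⟨rfl, rfl⟩; exact hne rfl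
    have e2 : ¬(a = j ∧ a = i) := by rintro ⟨rfl, rfl⟩; exact hne rfl
    simp [e1, e2]
  have hm1 : ∀ a b : Fin n, mred G μ1 a b = mred G ν a b := by
    intro a b
    by_cases hab : a = b
    · subst hab; rw [mred_self, mred_self]
    · unfold mred; rw [h1 a b hab, h1 b a (Ne.symm hab)]
  have hm2 : ∀ a b : Fin n, mred G μ2 a b = mred G ν a b
      + (if (a = i ∧ b = j) ∨ (a = j ∧ b = i) then 1 else 0) := by
    intro a b
    by_cases hab : a = b
    · subst hab
      have e : ¬((a = i ∧ a = j) ∨ (a = j ∧ a = i)) := by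
        rintro (⟨rfl, rfl⟩ | ⟨rfl, rfl⟩) <;> exact hne rfl
      rw [mred_self, mred_self, if_neg e]
    · by_cases hc1 : a = i ∧ b = j
      · obtain ⟨rfl, rfl⟩ := hc1
        have hba : ¬ b = a := fun h => hab h.symm
        have v1 : μ2 (a, b) = ν (a, b) + 1 := by rw [h3]; simp [hab]
        have v2 : μ2 (b, a) = ν (b, a) + 1 := by rw [h3]; simp [hba]
        unfold mred
        rw [if_pos hij, if_pos hij, v1, v2, if_pos (Or.inl ⟨rfl, rfl⟩)]
        omega
      · by_cases hc2 : a = j ∧ b = i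
        · obtain ⟨rfl, rfl⟩ := hc2
          have hba : ¬ b = a := fun h => hab h.symm
          have v1 : μ2 (a, b) = ν (a, b) + 1 := by rw [h3]; simp [hab]
          have v2 : μ2 (b, a) = ν (b, a) + 1 := by rw [h3]; simp [hba]
          unfold mred
          rw [if_pos hij.symm, if_pos hij.symm, v1, v2, if_pos (Or.inr ⟨rfl, rfl⟩)]
          omega
        · have hc1' : ¬(b = j ∧ a = i) := fun h => hc1 ⟨h.2, h.1⟩
          have hc2' : ¬(b = i ∧ a = j) := fun h => hc2 ⟨h.2, h.1⟩
          have v1 : μ2 (a, b) = ν (a, b) := by rw [h3]; simp [hc1, hc2]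
          have v2 : μ2 (b, a) = ν (b, a) := by rw [h3]; simp [hc1', hc2']
          rw [if_neg (fun h => (not_or.mpr ⟨hc1, hc2⟩) h)]
          unfold mred
          rw [v1, v2]
          simp
  have hs1 : ∀ a : Fin n, ∑ c, mred G μ1 a c = ∑ c, mred G ν a c := by
    intro a; exact Finset.sum_congr rfl fun c _ => hm1 a c
  have hs2 : ∀ a : Fin n, ∑ c, mred G μ2 a c = (∑ c, mred G ν a c)
      + ((if a = i then 1 else 0) + (if a = j then 1 else 0)) := by
    intro a
    have : ∑ c, mred G μ2 a c = ∑ c, (mred G ν a c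
        + (if (a = i ∧ c = j) ∨ (a = j ∧ c = i) then 1 else 0)) :=
      Finset.sum_congr rfl fun c _ => hm2 a c
    rw [this, Finset.sum_add_distrib]
    congr 1
    by_cases hai : a = i
    · subst hai
      have hna : ¬ a = j := fun h => hne (h ▸ rfl)
      rw [if_pos rfl, if_neg hna]
      have : ∀ c : Fin n, (if (a = a ∧ c = j) ∨ (a = j ∧ c = a) then 1 else 0)
          = if c = j then (1:ℕ) else 0 := by
        intro c
        by_cases hc : c = j
        · rw [if_pos (Or.inl ⟨rfl, hc⟩), if_pos hc]
        · rw [if_neg, if_neg hc]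
          rintro (⟨_, h⟩ | ⟨h, _⟩)
          · exact hc h
          · exact hna h
      rw [Finset.sum_congr rfl fun c _ => this c]
      simp
    · by_cases haj : a = j
      · subst haj
        rw [if_neg hai, if_pos rfl]
        have : ∀ c : Fin n, (if (a = i ∧ c = a) ∨ (a = a ∧ c = i) then 1 else 0)
            = if c = i then (1:ℕ) else 0 := by
          intro c
          by_cases hc : c = i
          · rw [if_pos (Or.inr ⟨rfl, hc⟩), if_pos hc]
          · rw [if_neg, if_neg hc]
            rintro (⟨h, _⟩ | ⟨_, h⟩)
            · exact hai h
            · exact hc h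
        rw [Finset.sum_congr rfl fun c _ => this c]
        simp
      · rw [if_neg hai, if_neg haj]
        have : ∀ c : Fin n, (if (a = i ∧ c = j) ∨ (a = j ∧ c = i) then 1 else 0) = (0:ℕ) := by
          intro c
          rw [if_neg]
          rintro (⟨h, _⟩ | ⟨h, _⟩)
          · exact hai h
          · exact haj h
        rw [Finset.sum_congr rfl fun c _ => this c]
        simp
  ext ⟨a, b⟩
  rw [Nred_apply, Nred_apply]
  by_cases hab : a = b
  · subst hab
    rw [if_pos rfl, if_pos rfl, h2, h4, hs1, hs2]
    omega
  · rw [if_neg hab, if_neg hab, h1 a b hab, h3 a b, hm1, hm2]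
    have hle : mred G ν a b ≤ ν (a, b) := mred_le G ν a b
    have : (if (a = i ∧ b = j) ∨ (a = j ∧ b = i) then (1:ℕ) else 0)
        = (if a = i ∧ b = j then 1 else 0) + (if a = j ∧ b = i then 1 else 0) := by
      by_cases hc1 : a = i ∧ b = j
      · have hc2 : ¬(a = j ∧ b = i) := by
          rintro ⟨h, _⟩; exact hne (hc1.1.symm.trans h)
        rw [if_pos (Or.inl hc1), if_pos hc1, if_neg hc2]
      · by_cases hc2 : a = j ∧ b = i
        · rw [if_pos (Or.inr hc2), if_neg hc1, if_pos hc2]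
        · rw [if_neg (by rintro (h | h); exacts [hc1 h, hc2 h]), if_neg hc1, if_neg hc2]
    rw [this]
    omega

lemma diagMinor_eq (K : Type*) [Field K] (i j : Fin n) :
    diagMinor K n i j
      = monomial (Finsupp.single (i, i) 1 + Finsupp.single (j, j) 1) (1 : K)
        - monomial (Finsupp.single (i, j) 1 + Finsupp.single (j, i) 1) (1 : K) := by
  rw [diagMinor, MvPolynomial.X, MvPolynomial.X, MvPolynomial.X, MvPolynomial.X,
    monomial_mul, monomial_mul, one_mul]

lemma mapDomain_mul_diagMinor (K : Type*) [Field K] (G : SimpleGraph (Fin n))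
    {i j : Fin n} (hij : G.Adj i j) (q : MvPolynomial (Fin n × Fin n) K) :
    Finsupp.mapDomain (Nred G) (AddMonoidAlgebra.coeff (q * diagMinor K n i j)) = 0 := by
  have hsub : ∀ x y : MvPolynomial (Fin n × Fin n) K,
      Finsupp.mapDomain (Nred G) (AddMonoidAlgebra.coeff (x - y))
        = Finsupp.mapDomain (Nred G) (AddMonoidAlgebra.coeff x)
          - Finsupp.mapDomain (Nred G) (AddMonoidAlgebra.coeff y) := fun x y => by
    rw [AddMonoidAlgebra.coeff_sub]
    exact map_sub (Finsupp.mapDomain.addMonoidHom (Nred G)) _ _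
  induction q using MvPolynomial.induction_on' with
  | monomial u a =>
      rw [diagMinor_eq, mul_sub, monomial_mul, monomial_mul, hsub,
        ← MvPolynomial.single_eq_monomial, ← MvPolynomial.single_eq_monomial,
          AddMonoidAlgebra.coeff_single, AddMonoidAlgebra.coeff_single,
        Finsupp.mapDomain_single, Finsupp.mapDomain_single, key_exchange G hij u, sub_self]
  | add p q hp hq =>
      rw [add_mul, AddMonoidAlgebra.coeff_add, Finsupp.mapDomain_add, hp, hq, add_zero]

lemma mapDomain_zero_of_mem (K : Type*) [Field K] (G : SimpleGraph (Fin n))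
    {f : MvPolynomial (Fin n × Fin n) K} (hf : f ∈ diagIdeal K n G) :
    Finsupp.mapDomain (Nred G) (AddMonoidAlgebra.coeff f) = 0 := by
  have H : ∀ q : MvPolynomial (Fin n × Fin n) K,
      Finsupp.mapDomain (Nred G) (AddMonoidAlgebra.coeff (q * f)) = 0 := by
    refine Submodule.span_induction ?_ ?_ ?_ ?_ hf
    · rintro x ⟨i, j, hij, hlt, rfl⟩ q
      exact mapDomain_mul_diagMinor K G hij q
    · intro q; rw [mul_zero]
      exact Finsupp.mapDomain_zero
    · intro x y hx hy hqx hqy q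
      rw [mul_add, AddMonoidAlgebra.coeff_add, Finsupp.mapDomain_add, hqx q, hqy q, add_zero]
    · intro a x hx hqx q
      rw [smul_eq_mul, ← mul_assoc]
      exact hqx (q * a)
  have := H 1; rwa [one_mul] at this

lemma finsupp_partner {α β M : Type*} [AddCommMonoid M] (N : α → β)
    (F : α →₀ M) (hF : Finsupp.mapDomain N F = 0) {μ : α} (hμ : μ ∈ F.support) :
    ∃ ν ∈ F.support, ν ≠ μ ∧ N ν = N μ := by
  by_contra hcon
  push_neg at hcon
  have h0 : (Finsupp.mapDomain N F) (N μ) = 0 := by rw [hF]; rfl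
  rw [Finsupp.mapDomain, Finsupp.sum_apply, Finsupp.sum] at h0
  rw [Finset.sum_eq_single_of_mem μ hμ
    (fun ν hν hne => Finsupp.single_eq_of_ne' (hcon ν hν hne))] at h0
  rw [Finsupp.single_eq_same] at h0
  exact Finsupp.mem_support_iff.mp hμ h0

lemma exists_partner {K : Type*} [Field K] (G : SimpleGraph (Fin n))
    {f : MvPolynomial (Fin n × Fin n) K} (hf : Finsupp.mapDomain (Nred G) (AddMonoidAlgebra.coeff f) = 0)
    {μ : (Fin n × Fin n) →₀ ℕ} (hμ : μ ∈ f.support) :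
    ∃ ν ∈ f.support, ν ≠ μ ∧ Nred G ν = Nred G μ :=
  finsupp_partner (Nred G) (AddMonoidAlgebra.coeff f) hf hμ

lemma varRank_inj {p q : Fin n × Fin n} (h : varRank n p = varRank n q) : p = q := by
  obtain ⟨a, b⟩ := p; obtain ⟨c, d⟩ := q
  unfold varRank at h
  simp only at h
  have hb := b.isLt; have hd := d.isLt
  have hac : (a : ℕ) = c := by
    rcases lt_trichotomy (a : ℕ) (c : ℕ) with h' | h' | h'
    · have h2 : (a : ℕ) * n + n ≤ c * n := by
        have := Nat.mul_le_mul_right n (Nat.succ_le_of_lt h')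
        rwa [Nat.succ_mul] at this
      linarith
    · exact h'
    · have h2 : (c : ℕ) * n + n ≤ a * n := by
        have := Nat.mul_le_mul_right n (Nat.succ_le_of_lt h')
        rwa [Nat.succ_mul] at this
      linarith
  have hbd : (b : ℕ) = d := by rw [hac] at h; omega
  simp [Prod.ext_iff, Fin.ext_iff, hac, hbd]

lemma revlex_asymm {μ ν : (Fin n × Fin n) →₀ ℕ}
    (h1 : RevLexLt n μ ν) (h2 : RevLexLt n ν μ) : False := by
  obtain ⟨v1, hv1, hw1⟩ := h1
  obtain ⟨v2, hv2, hw2⟩ := h2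
  rcases lt_trichotomy (varRank n v1) (varRank n v2) with h | h | h
  · have := hw1 v2 h; omega
  · have : v1 = v2 := varRank_inj h
    subst this; omega
  · have := hw2 v1 h; omega

lemma initial_diagMinor (K : Type*) [Field K] {i j : Fin n} (hij : i < j) :
    IsInitialMonomial n (diagMinor K n i j)
      (Finsupp.single (i, j) 1 + Finsupp.single (j, i) 1) := by
  have hne : i ≠ j := ne_of_lt hij
  have hne' : j ≠ i := hne.symm
  set d : (Fin n × Fin n) →₀ ℕ := Finsupp.single (i, i) 1 + Finsupp.single (j, j) 1 with hd
  set o : (Fin n × Fin n) →₀ ℕ := Finsupp.single (i, j) 1 + Finsupp.single (j, i) 1 with ho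
  have hdo : d ≠ o := by
    intro h
    have h1 : d (i, i) = 1 := by
      rw [hd]; simp [Finsupp.add_apply, Finsupp.single_apply, Prod.ext_iff, hne']
    have h2 : o (i, i) = 0 := by
      rw [ho]; simp [Finsupp.add_apply, Finsupp.single_apply, Prod.ext_iff, hne, hne']
    rw [h] at h1; rw [h1] at h2; exact one_ne_zero h2
  have hco : MvPolynomial.coeff o (diagMinor K n i j) = -1 := by
    rw [diagMinor_eq, MvPolynomial.coeff_sub, MvPolynomial.coeff_monomial,
      MvPolynomial.coeff_monomial, if_neg hdo, if_pos rfl]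
    ring
  have hne0 : diagMinor K n i j ≠ 0 := by
    intro h
    rw [h, MvPolynomial.coeff_zero] at hco
    have h1 : (-1 : K) = 0 := hco.symm
    have h2 : (1 : K) = 0 := neg_eq_zero.mp h1
    exact one_ne_zero h2
  have hmem : o ∈ (diagMinor K n i j).support := by
    rw [MvPolynomial.mem_support_iff, hco]
    exact neg_ne_zero.mpr one_ne_zero
  refine ⟨hne0, hmem, ?_⟩
  intro ν hν hνo
  have hsupp : ν = d ∨ ν = o := by
    have := MvPolynomial.support_sub (Fin n × Fin n)
      (monomial d (1 : K)) (monomial o (1 : K))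
    rw [← diagMinor_eq] at this
    have h2 := this hν
    simp only [Finset.mem_union, MvPolynomial.support_monomial, one_ne_zero, if_false,
      Finset.mem_singleton] at h2
    exact h2
  have hνd : ν = d := hsupp.resolve_right hνo
  subst hνd
  -- show RevLexLt n d o with witness (j, j)
  have hvij : (i : ℕ) < (j : ℕ) := hij
  have hjn : (j : ℕ) < n := j.isLt
  have hmul : (i : ℕ) * n ≤ (j : ℕ) * n := Nat.mul_le_mul_right n (le_of_lt hvij)
  refine ⟨(j, j), ?_, ?_⟩
  · have h1 : d (j, j) = 1 := by
      rw [hd]; simp [Finsupp.add_apply, Finsupp.single_apply, Prod.ext_iff, hne]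
    have h2 : o (j, j) = 0 := by
      rw [ho]; simp [Finsupp.add_apply, Finsupp.single_apply, Prod.ext_iff, hne, hne']
    rw [h1, h2]; exact Nat.zero_lt_one
  · intro w hw
    have hwii : w ≠ (i, i) := by
      rintro rfl
      unfold varRank at hw; simp only at hw
      linarith
    have hwjj : w ≠ (j, j) := by
      rintro rfl; exact lt_irrefl _ hw
    have hwij : w ≠ (i, j) := by
      rintro rfl
      unfold varRank at hw; simp only at hw
      linarith
    have hwji : w ≠ (j, i) := by
      rintro rfl
      unfold varRank at hw; simp only at hw
      linarith
    have h1 : d w = 0 := by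
      rw [hd, Finsupp.add_apply, Finsupp.single_eq_of_ne' (Ne.symm hwii),
        Finsupp.single_eq_of_ne' (Ne.symm hwjj)]
      rfl
    have h2 : o w = 0 := by
      rw [ho, Finsupp.add_apply, Finsupp.single_eq_of_ne' (Ne.symm hwij),
        Finsupp.single_eq_of_ne' (Ne.symm hwji)]
      rfl
    rw [h1, h2]

lemma key_divides (K : Type*) [Field K] (G : SimpleGraph (Fin n))
    {f : MvPolynomial (Fin n × Fin n) K} (hf : f ∈ diagIdeal K n G)
    {μ : (Fin n × Fin n) →₀ ℕ} (hinit : IsInitialMonomial n f μ) :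
    ∃ i j : Fin n, G.Adj i j ∧ i < j ∧ 1 ≤ μ (i, j) ∧ 1 ≤ μ (j, i) := by
  by_contra hcon
  push_neg at hcon
  -- all mred vanish on μ
  have hm : ∀ a b : Fin n, mred G μ a b = 0 := by
    intro a b
    by_cases hab : a = b
    · subst hab; exact mred_self G μ a
    · by_cases hadj : G.Adj a b
      · rcases lt_or_gt_of_ne (fun h : a = b => hab h) with h | h
        · have := hcon a b hadj h
          unfold mred; rw [if_pos hadj]; omega
        · have := hcon b a hadj.symm h
          unfold mred; rw [if_pos hadj]
          omega
      · unfold mred; rw [if_neg hadj]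
  have hNμ : Nred G μ = μ := by
    ext ⟨a, b⟩
    rw [Nred_apply]
    by_cases hab : a = b
    · subst hab; rw [if_pos rfl]; simp [hm]
    · rw [if_neg hab, hm]; omega
  obtain ⟨hf0, hμs, hrest⟩ := hinit
  obtain ⟨ν, hνs, hνμ, hNν⟩ := exists_partner G (mapDomain_zero_of_mem K G hf) hμs
  rw [hNμ] at hNν
  -- pointwise relations between ν and μ
  have hoff : ∀ a b : Fin n, a ≠ b → μ (a, b) = ν (a, b) - mred G ν a b := by
    intro a b hab
    rw [← hNν, Nred_apply, if_neg hab]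
  have hdiag : ∀ a : Fin n, μ (a, a) = ν (a, a) + ∑ c, mred G ν a c := by
    intro a
    rw [← hNν, Nred_apply, if_pos rfl]
  -- the largest-rank position where μ and ν differ
  have hne : ∃ p : Fin n × Fin n, μ p ≠ ν p := by
    by_contra h
    push_neg at h
    exact hνμ (Finsupp.ext fun p => (h p).symm)
  obtain ⟨p0, hp0⟩ := hne
  have hD : (Finset.univ.filter fun p : Fin n × Fin n => μ p ≠ ν p).Nonempty :=
    ⟨p0, Finset.mem_filter.mpr ⟨Finset.mem_univ _, hp0⟩⟩
  obtain ⟨v, hvD, hvmax⟩ := Finset.exists_max_image _ (varRank n) hD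
  have hvne : μ v ≠ ν v := (Finset.mem_filter.mp hvD).2
  have hvdiag : v.1 = v.2 := by
    by_contra hvd
    obtain ⟨a, b⟩ := v
    simp only at hvd
    -- mred G ν a b ≥ 1
    have hmv : 1 ≤ mred G ν a b := by
      by_contra hmv
      push_neg at hmv
      have hz : mred G ν a b = 0 := by omega
      exact hvne (by rw [hoff a b hvd, hz]; omega)
    have hadj : G.Adj a b := by
      by_contra hadj
      have : mred G ν a b = 0 := by unfold mred; rw [if_neg hadj]
      omega
    have habne : (a : ℕ) ≠ (b : ℕ) := fun h => hvd (Fin.ext h)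
    -- let c be the larger endpoint
    set c : Fin n := if (a : ℕ) < (b : ℕ) then b else a with hc
    set e : Fin n := if (a : ℕ) < (b : ℕ) then a else b with he
    have hmce : 1 ≤ mred G ν c e := by
      rw [hc, he]
      by_cases h' : (a : ℕ) < (b : ℕ)
      · rw [if_pos h', if_pos h', ← mred_symm]; exact hmv
      · rw [if_neg h', if_neg h']; exact hmv
    have hsum : 1 ≤ ∑ x, mred G ν c x :=
      le_trans hmce (Finset.single_le_sum (fun x _ => Nat.zero_le _) (Finset.mem_univ e))
    have hcc : μ (c, c) ≠ ν (c, c) := by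
      rw [hdiag c]; omega
    have hrank : varRank n (a, b) < varRank n (c, c) := by
      unfold varRank; simp only
      rw [hc]
      have hbn := b.isLt
      have han := a.isLt
      by_cases h' : (a : ℕ) < (b : ℕ)
      · rw [if_pos h']
        have : (a : ℕ) * n + n ≤ (b : ℕ) * n := by
          have := Nat.mul_le_mul_right n (Nat.succ_le_of_lt h')
          rwa [Nat.succ_mul] at this
        linarith
      · rw [if_neg h']
        have : (b : ℕ) < (a : ℕ) := by omega
        linarith
    have := hvmax (c, c) (Finset.mem_filter.mpr ⟨Finset.mem_univ _, hcc⟩)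
    omega
  -- v is diagonal, so μ v > ν v
  have hvlt : ν v < μ v := by
    obtain ⟨a, b⟩ := v
    have : a = b := hvdiag
    subst this
    have := hdiag a
    rw [this] at hvne ⊢
    omega
  have hμν : RevLexLt n μ ν := by
    refine ⟨v, hvlt, ?_⟩
    intro w hw
    by_contra hwne
    have := hvmax w (Finset.mem_filter.mpr ⟨Finset.mem_univ _, hwne⟩)
    omega
  exact revlex_asymm hμν (hrest ν hνs hνμ)

end

/-- The initial monomial of `f_{ij}` (for `i < j`) w.r.t. the reverse
lexicographic order is `x_{ij}x_{ji}`, and the `f_{ij}` over the edges of `G`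
form a Gröbner basis of `P_G`: their initial monomials generate the initial
ideal of `P_G`. -/
theorem stmt10 (K : Type*) [Field K] (n : ℕ) (G : SimpleGraph (Fin n)) :
    (∀ i j : Fin n, i < j →
        IsInitialMonomial n (diagMinor K n i j)
          (Finsupp.single (i, j) 1 + Finsupp.single (j, i) 1)) ∧
      initialIdeal K n (diagIdeal K n G) =
        Ideal.span {g | ∃ i j : Fin n, G.Adj i j ∧ i < j ∧
          g = X (i, j) * X (j, i)} := by
  constructor
  · intro i j hij
    exact initial_diagMinor K hij
  · have hXX : ∀ i j : Fin n, (X (i, j) : MvPolynomial (Fin n × Fin n) K) * X (j, i)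
        = monomial (Finsupp.single (i, j) 1 + Finsupp.single (j, i) 1) (1 : K) := by
      intro i j
      rw [MvPolynomial.X, MvPolynomial.X, monomial_mul, one_mul]
    apply le_antisymm
    · rw [initialIdeal, Ideal.span_le]
      rintro g ⟨f, hf, μ, hinit, rfl⟩
      obtain ⟨i, j, hadj, hij, h1, h2⟩ := key_divides K G hf hinit
      set o : (Fin n × Fin n) →₀ ℕ := Finsupp.single (i, j) 1 + Finsupp.single (j, i) 1 with ho
      have hole : o ≤ μ := by
        rw [Finsupp.le_def]
        intro p
        rw [ho, Finsupp.add_apply]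
        by_cases h' : p = (i, j)
        · subst h'
          rw [Finsupp.single_eq_same, Finsupp.single_eq_of_ne']
          · omega
          · intro h
            simp only [Prod.mk.injEq] at h
            exact (ne_of_lt hij) h.2
        · by_cases h'' : p = (j, i)
          · subst h''
            rw [Finsupp.single_eq_same, Finsupp.single_eq_of_ne']
            · omega
            · intro h
              simp only [Prod.mk.injEq] at h
              exact (ne_of_lt hij) h.1
          · rw [Finsupp.single_eq_of_ne' (fun h => h' h.symm),
              Finsupp.single_eq_of_ne' (fun h => h'' h.symm)]
            omega
      have hXmem : (X (i, j) : MvPolynomial (Fin n × Fin n) K) * X (j, i)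
          ∈ Ideal.span {g | ∃ i j : Fin n, G.Adj i j ∧ i < j ∧
            g = (X (i, j) : MvPolynomial (Fin n × Fin n) K) * X (j, i)} :=
        Ideal.subset_span ⟨i, j, hadj, hij, rfl⟩
      have heq : (monomial μ (1 : K))
          = monomial (μ - o) 1 * (X (i, j) * X (j, i)) := by
        rw [hXX, monomial_mul, one_mul, tsub_add_cancel_of_le hole]
      rw [heq]
      exact Ideal.mul_mem_left _ _ hXmem
    · rw [Ideal.span_le]
      rintro g ⟨i, j, hadj, hij, rfl⟩
      rw [initialIdeal]
      apply Ideal.subset_span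
      refine ⟨diagMinor K n i j, ?_, Finsupp.single (i, j) 1 + Finsupp.single (j, i) 1,
        initial_diagMinor K hij, ?_⟩
      · exact Ideal.subset_span ⟨i, j, hadj, hij, rfl⟩
      · rw [hXX]
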